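/- Let n ≥ 1, a > 0, and let φ : ℝ → ℝ satisfy F(φ(t)) e^{φ(t)} = e^{nt}/n + F(a) e^a with φ(t) > a for all t, where F(s) = ∑_{r=0}^{n-1} (-1)^{n-r-1} ((n-1)!/r!) s^r. Then as t → −∞, φ(t) = a + (1/n) a^{1-n} e^{−a} e^{nt} + O(e^{2nt}); in particular φ(t) → a as t → −∞. -/

import Mathlib

open Real Finset Filter Asymptotics

private lemma sum_deriv_eq (m : ℕ) (s : ℝ) :
    (∑ r ∈ Finset.range (m+1),
      (-1:ℝ)^(m+1-r-1) * ((Nat.factorial m : ℝ)/(Nat.factorial r)) * ((r : ℝ) * s^(r-1)))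
    + (∑ r ∈ Finset.range (m+1),
      (-1:ℝ)^(m+1-r-1) * ((Nat.factorial m : ℝ)/(Nat.factorial r)) * s^r)
    = s^m := by
  rw [Finset.sum_range_succ'
    (fun r => (-1:ℝ)^(m+1-r-1) * ((Nat.factorial m : ℝ)/(Nat.factorial r)) * ((r : ℝ) * s^(r-1))) m,
    Finset.sum_range_succ
    (fun r => (-1:ℝ)^(m+1-r-1) * ((Nat.factorial m : ℝ)/(Nat.factorial r)) * s^r) m]
  have h0 : (-1:ℝ)^(m+1-0-1) * ((Nat.factorial m : ℝ)/(Nat.factorial 0)) * ((0:ℕ) * s^(0-1)) = 0 := by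
    simp
  have hm : (-1:ℝ)^(m+1-m-1) * ((Nat.factorial m : ℝ)/(Nat.factorial m)) * s^m = s^m := by
    have : m+1-m-1 = 0 := by omega
    rw [this]
    have : (Nat.factorial m : ℝ) ≠ 0 := Nat.cast_ne_zero.mpr (Nat.factorial_ne_zero m)
    field_simp
  rw [h0, hm, add_zero]
  have key : ∀ i ∈ Finset.range m,
      (-1:ℝ)^(m+1-(i+1)-1) * ((Nat.factorial m : ℝ)/(Nat.factorial (i+1))) * (((i+1:ℕ) : ℝ) * s^((i+1)-1))
      + (-1:ℝ)^(m+1-i-1) * ((Nat.factorial m : ℝ)/(Nat.factorial i)) * s^i = 0 := by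
    intro i hi
    have hi' := Finset.mem_range.mp hi
    have e1 : m+1-(i+1)-1 = m - i - 1 := by omega
    have e2 : m+1-i-1 = (m - i - 1) + 1 := by omega
    have e3 : (i+1) - 1 = i := by omega
    rw [e1, e2, e3, pow_succ]
    have hf : (Nat.factorial (i+1) : ℝ) = ((i:ℝ)+1) * (Nat.factorial i : ℝ) := by
      rw [Nat.factorial_succ]; push_cast; ring
    rw [hf]
    have h1 : (Nat.factorial i : ℝ) ≠ 0 := Nat.cast_ne_zero.mpr (Nat.factorial_ne_zero i)
    have h2 : ((i:ℝ)+1) ≠ 0 := by positivity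
    field_simp
    push_cast
    ring
  calc (∑ i ∈ Finset.range m,
        (-1:ℝ)^(m+1-(i+1)-1) * ((Nat.factorial m : ℝ)/(Nat.factorial (i+1))) * (((i+1:ℕ):ℝ) * s^((i+1)-1)))
      + ((∑ r ∈ Finset.range m,
        (-1:ℝ)^(m+1-r-1) * ((Nat.factorial m : ℝ)/(Nat.factorial r)) * s^r) + s^m)
      = (∑ i ∈ Finset.range m,
          ((-1:ℝ)^(m+1-(i+1)-1) * ((Nat.factorial m : ℝ)/(Nat.factorial (i+1))) * (((i+1:ℕ):ℝ) * s^((i+1)-1))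
          + (-1:ℝ)^(m+1-i-1) * ((Nat.factorial m : ℝ)/(Nat.factorial i)) * s^i)) + s^m := by
        rw [Finset.sum_add_distrib]; ring
    _ = s^m := by rw [Finset.sum_congr rfl key]; simp

private lemma pow_exp_lip (m : ℕ) (a R : ℝ) (ha : 0 < a) (hR : a ≤ R) :
    ∀ x, a < x → x ≤ R →
      x^m * Real.exp x - a^m * Real.exp a
        ≤ (((m:ℝ)*R^(m-1) + R^m) * Real.exp R) * (x - a) := by
  intro x hax hxR
  obtain ⟨η, hη, heq⟩ := exists_hasDerivAt_eq_slope (fun s => s^m * Real.exp s)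
      (fun s => ((m:ℝ) * s^(m-1)) * Real.exp s + s^m * Real.exp s) hax
      (fun y _ => ((hasDerivAt_pow m y).mul (Real.hasDerivAt_exp y)).continuousAt.continuousWithinAt)
      (fun y _ => (hasDerivAt_pow m y).mul (Real.hasDerivAt_exp y))
  have hxa : (0:ℝ) < x - a := by linarith
  have hval : x^m * Real.exp x - a^m * Real.exp a
      = (((m:ℝ) * η^(m-1)) * Real.exp η + η^m * Real.exp η) * (x - a) := by
    have := heq
    field_simp at this
    linarith [this]
  rw [hval]
  have hη0 : 0 ≤ η := le_of_lt (lt_trans ha hη.1)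
  have hηR : η ≤ R := le_trans (le_of_lt hη.2) hxR
  have h1 : η^(m-1) ≤ R^(m-1) := pow_le_pow_left₀ hη0 hηR _
  have h2 : η^m ≤ R^m := pow_le_pow_left₀ hη0 hηR _
  have h3 : Real.exp η ≤ Real.exp R := Real.exp_le_exp.mpr hηR
  have hexpη : 0 < Real.exp η := Real.exp_pos η
  have hnn : (0:ℝ) ≤ (m:ℝ) * η^(m-1) + η^m :=
    add_nonneg (mul_nonneg (Nat.cast_nonneg m) (pow_nonneg hη0 _)) (pow_nonneg hη0 _)
  have hmain : ((m:ℝ) * η^(m-1)) * Real.exp η + η^m * Real.exp η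
      ≤ ((m:ℝ)*R^(m-1) + R^m) * Real.exp R := by
    have hm0 : (0:ℝ) ≤ (m:ℝ) := Nat.cast_nonneg m
    calc ((m:ℝ) * η^(m-1)) * Real.exp η + η^m * Real.exp η
        = ((m:ℝ) * η^(m-1) + η^m) * Real.exp η := by ring
      _ ≤ ((m:ℝ)*R^(m-1) + R^m) * Real.exp R :=
        mul_le_mul (add_le_add (mul_le_mul_of_nonneg_left h1 hm0) h2) h3 hexpη.le
          (add_nonneg (mul_nonneg hm0 (pow_nonneg (le_trans ha.le hR) _))
            (pow_nonneg (le_trans ha.le hR) _))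
  exact mul_le_mul_of_nonneg_right hmain hxa.le

/-- For `a > 0`, as `t → −∞`,
`φ(t) = a + (1/n) a^{1-n} e^{−a} e^{nt} + O(e^{2nt})`; in particular `φ(t) → a`. -/
theorem stmt_5 (n : ℕ) (hn : 1 ≤ n) (a : ℝ) (ha : 0 < a)
    (F : ℝ → ℝ)
    (hF : ∀ x : ℝ, F x = ∑ r ∈ Finset.range n,
      (-1 : ℝ) ^ (n - r - 1) * ((Nat.factorial (n - 1) : ℝ) / (Nat.factorial r : ℝ)) * x ^ r)
    (φ : ℝ → ℝ) (hφa : ∀ t, a < φ t)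
    (hφeq : ∀ t, F (φ t) * Real.exp (φ t) = Real.exp (n * t) / n + F a * Real.exp a) :
    (fun t => φ t - (a + (1 / n) * a ^ (1 - (n : ℤ)) * Real.exp (-a) * Real.exp (n * t)))
      =O[atBot] (fun t => Real.exp (2 * n * t)) ∧
    Filter.Tendsto φ atBot (nhds a) := by
  obtain ⟨m, rfl⟩ : ∃ m, n = m + 1 := ⟨n - 1, by omega⟩
  have hG : ∀ s : ℝ, HasDerivAt (fun x => F x * Real.exp x) (s ^ m * Real.exp s) s := by
    intro s
    have hFfun : F = fun x => ∑ r ∈ Finset.range (m+1),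
        (-1 : ℝ) ^ (m+1 - r - 1) * ((Nat.factorial m : ℝ) / (Nat.factorial r : ℝ)) * x ^ r := by
      funext x; rw [hF x]; simp
    rw [hFfun]
    have hd : HasDerivAt (fun x => ∑ r ∈ Finset.range (m+1),
        (-1 : ℝ) ^ (m+1 - r - 1) * ((Nat.factorial m : ℝ) / (Nat.factorial r : ℝ)) * x ^ r)
        (∑ r ∈ Finset.range (m+1),
        (-1 : ℝ) ^ (m+1 - r - 1) * ((Nat.factorial m : ℝ) / (Nat.factorial r : ℝ)) * ((r:ℝ) * s ^ (r-1))) s :=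
      HasDerivAt.fun_sum (fun r _ => (hasDerivAt_pow r s).const_mul _)
    have := hd.fun_mul (Real.hasDerivAt_exp s)
    refine this.congr_deriv ?_
    rw [show (∑ r ∈ Finset.range (m+1),
        (-1 : ℝ) ^ (m+1 - r - 1) * ((Nat.factorial m : ℝ) / (Nat.factorial r : ℝ)) * ((r:ℝ) * s ^ (r-1))) * Real.exp s
        + (∑ r ∈ Finset.range (m+1),
        (-1 : ℝ) ^ (m+1 - r - 1) * ((Nat.factorial m : ℝ) / (Nat.factorial r : ℝ)) * s ^ r) * Real.exp s
        = ((∑ r ∈ Finset.range (m+1),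
        (-1 : ℝ) ^ (m+1 - r - 1) * ((Nat.factorial m : ℝ) / (Nat.factorial r : ℝ)) * ((r:ℝ) * s ^ (r-1)))
        + (∑ r ∈ Finset.range (m+1),
        (-1 : ℝ) ^ (m+1 - r - 1) * ((Nat.factorial m : ℝ) / (Nat.factorial r : ℝ)) * s ^ r)) * Real.exp s from by ring,
      sum_deriv_eq]
  set N : ℝ := ((m+1 : ℕ) : ℝ) with hN
  have hNpos : (0:ℝ) < N := by positivity
  set ε : ℝ → ℝ := fun t => Real.exp (N * t) / N with hε
  have hεpos : ∀ t, 0 < ε t := fun t => by positivity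
  have hkey : ∀ t, F (φ t) * Real.exp (φ t) - F a * Real.exp a = ε t := by
    intro t; have := hφeq t; simp only [hε]; linarith
  have hMVT : ∀ t, ∃ ξ, a < ξ ∧ ξ < φ t ∧ ε t = ξ ^ m * Real.exp ξ * (φ t - a) := by
    intro t
    obtain ⟨ξ, hξ, heq⟩ := exists_hasDerivAt_eq_slope (fun x => F x * Real.exp x)
        (fun s => s ^ m * Real.exp s) (hφa t)
        (fun y _ => (hG y).continuousAt.continuousWithinAt)
        (fun y _ => hG y)
    refine ⟨ξ, hξ.1, hξ.2, ?_⟩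
    have hne : φ t - a ≠ 0 := by have := hφa t; intro h; linarith
    have heq' : ξ ^ m * Real.exp ξ
        = (F (φ t) * Real.exp (φ t) - F a * Real.exp a) / (φ t - a) := heq
    rw [heq', div_mul_cancel₀ _ hne]
    exact (hkey t).symm
  set c0 : ℝ := a ^ m * Real.exp a with hc0def
  have hc0 : 0 < c0 := by positivity
  have hlow : ∀ ξ : ℝ, a ≤ ξ → c0 ≤ ξ ^ m * Real.exp ξ := by
    intro ξ hξ
    exact mul_le_mul (pow_le_pow_left₀ ha.le hξ m) (Real.exp_le_exp.mpr hξ)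
      (Real.exp_pos a).le (pow_nonneg (le_trans ha.le hξ) m)
  have hupper : ∀ t, φ t - a ≤ ε t / c0 := by
    intro t
    obtain ⟨ξ, hξa, hξφ, heq⟩ := hMVT t
    have h1 : c0 * (φ t - a) ≤ ξ ^ m * Real.exp ξ * (φ t - a) :=
      mul_le_mul_of_nonneg_right (hlow ξ hξa.le) (by have := hφa t; linarith)
    rw [le_div_iff₀ hc0]
    calc (φ t - a) * c0 = c0 * (φ t - a) := by ring
      _ ≤ ξ ^ m * Real.exp ξ * (φ t - a) := h1
      _ = ε t := heq.symm
  have htend : Filter.Tendsto φ atBot (nhds a) := by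
    have hε0 : Tendsto ε atBot (nhds 0) := by
      have h1 : Tendsto (fun t : ℝ => N * t) atBot atBot :=
        Tendsto.const_mul_atBot hNpos tendsto_id
      have h2 : Tendsto (fun t : ℝ => Real.exp (N * t)) atBot (nhds 0) :=
        Real.tendsto_exp_atBot.comp h1
      simpa [hε] using h2.div_const N
    have hup : Tendsto (fun t => a + ε t / c0) atBot (nhds a) := by
      have := (hε0.div_const c0).const_add a
      simpa using this
    refine tendsto_of_tendsto_of_tendsto_of_le_of_le tendsto_const_nhds hup
      (fun t => (hφa t).le) (fun t => by linarith [hupper t])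
  refine ⟨?_, htend⟩
  set B : ℝ := 1 / N / c0 with hB
  have hBpos : 0 < B := by positivity
  set M : ℝ := ((m:ℝ) * (a+B)^(m-1) + (a+B)^m) * Real.exp (a+B) with hM
  have haB : (0:ℝ) < a + B := by linarith
  have hM0 : 0 ≤ M := by positivity
  have hterm : ∀ t, a + 1 / N * a ^ (1 - ((m+1:ℕ) : ℤ)) * Real.exp (-a) * Real.exp (N * t)
      = a + ε t / c0 := by
    intro t
    have hz : a ^ (1 - ((m+1:ℕ) : ℤ)) = (a ^ m)⁻¹ := by
      have h : (1 - ((m+1:ℕ) : ℤ)) = -(m:ℤ) := by push_cast; ring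
      rw [h, zpow_neg, zpow_natCast]
    rw [hz, Real.exp_neg]
    simp only [hε, hc0def]
    field_simp
  rw [isBigO_iff]
  refine ⟨M / (c0^3 * N^2), ?_⟩
  filter_upwards [eventually_le_atBot (0:ℝ)] with t ht
  obtain ⟨ξ, hξa, hξφ, heq⟩ := hMVT t
  have hu : 0 < φ t - a := by linarith [hφa t]
  have hεB : ε t ≤ 1 / N := by
    simp only [hε]
    have h1 : Real.exp (N * t) ≤ 1 := by
      rw [← Real.exp_zero]
      exact Real.exp_le_exp.mpr (by nlinarith)
    rw [div_le_div_iff₀ hNpos hNpos]; nlinarith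
  have huB : φ t - a ≤ B := by
    refine le_trans (hupper t) ?_
    rw [hB]
    gcongr
  have hξB : ξ ≤ a + B := by linarith
  have hlip := pow_exp_lip m a (a+B) ha (by linarith) ξ hξa hξB
  have hdiff : φ t - (a + ε t / c0) = (φ t - a) * (c0 - ξ^m * Real.exp ξ) / c0 := by
    field_simp
    rw [heq]; ring
  have hslope : |c0 - ξ^m * Real.exp ξ| ≤ M * (φ t - a) := by
    rw [abs_sub_comm, abs_of_nonneg (by linarith [hlow ξ hξa.le])]
    have : ξ^m * Real.exp ξ - c0 ≤ M * (ξ - a) := by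
      rw [hc0def]; exact hlip
    calc ξ^m * Real.exp ξ - c0 ≤ M * (ξ - a) := this
      _ ≤ M * (φ t - a) := by nlinarith
  have habs : |φ t - (a + ε t / c0)| ≤ (φ t - a) * (M * (φ t - a)) / c0 := by
    rw [hdiff, abs_div, abs_of_pos hc0, abs_mul, abs_of_pos hu]
    gcongr
  have hεsq : Real.exp (2 * N * t) = Real.exp (N*t) * Real.exp (N*t) := by
    rw [← Real.exp_add]; ring_nf
  have hfin : (φ t - a) * (M * (φ t - a)) / c0 ≤ M / (c0^3 * N^2) * Real.exp (2*N*t) := by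
    have h1 : φ t - a ≤ ε t / c0 := hupper t
    have h2 : (φ t - a) * (M * (φ t - a)) / c0 ≤ (ε t / c0) * (M * (ε t / c0)) / c0 := by
      gcongr
    refine le_trans h2 (le_of_eq ?_)
    simp only [hε]
    rw [hεsq]
    field_simp
  calc ‖φ t - (a + 1 / N * a ^ (1 - ((m+1:ℕ) : ℤ)) * Real.exp (-a) * Real.exp (N * t))‖
      = |φ t - (a + ε t / c0)| := by rw [Real.norm_eq_abs, hterm t]
    _ ≤ (φ t - a) * (M * (φ t - a)) / c0 := habs
    _ ≤ M / (c0^3 * N^2) * Real.exp (2*N*t) := hfin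
    _ = M / (c0^3 * N^2) * ‖Real.exp (2*N*t)‖ := by
        rw [Real.norm_eq_abs, abs_of_pos (Real.exp_pos _)]
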